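/- Let ε > 0, let E : ℝ × ℝ² → ℝ² be C¹ with ∂_{x₂}E₁(t,x) = ∂_{x₁}E₂(t,x) for all (t,x), and let f : ℝ × ℝ² × ℝ² → ℝ be C¹ such that there exists R > 0 with f(t,x,v) = 0 whenever |x| + |v| ≥ R. Assume that for all (t,x,v), ∂_t f(t,x,v) + (v/ε)·∇_x f(t,x,v) + (E(t,x)/ε + v^⊥/ε²)·∇_v f(t,x,v) = 0. Define f̄(t,x,v) = f(t, x − ε v^⊥, v) and ρ̄(t,x) = ∫_{ℝ²} f̄(t,x,v) dv. Then for all (t,x), ∂_t ρ̄(t,x) + div_x ( ∫_{ℝ²} (E(t, x − ε v^⊥))^⊥ f̄(t,x,v) dv ) = 0. -/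

import Mathlib

open MeasureTheory

noncomputable abbrev R2 : Type := EuclideanSpace ℝ (Fin 2)

/-- For `w = (w₁, w₂) ∈ ℝ²`, `perp w = (−w₂, w₁)`. -/
noncomputable def perp (w : R2) : R2 := !₂[-w 1, w 0]

noncomputable def perpL : R2 →L[ℝ] R2 :=
  LinearMap.toContinuousLinearMap
  { toFun := perp
    map_add' := by intro a b; ext j; fin_cases j <;> simp [perp] <;> ring
    map_smul' := by intro c a; ext j; fin_cases j <;> simp [perp, mul_comm] }

@[simp] lemma perpL_apply (w : R2) : perpL w = perp w := rfl

lemma perp_e0 : perp (EuclideanSpace.single 0 (1:ℝ)) = EuclideanSpace.single 1 (1:ℝ) := by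
  ext j; fin_cases j <;> simp [perp, EuclideanSpace.single_apply]

lemma perp_e1 : perp (EuclideanSpace.single 1 (1:ℝ)) = -EuclideanSpace.single 0 (1:ℝ) := by
  ext j; fin_cases j <;> simp [perp, EuclideanSpace.single_apply]

lemma abs_coord_le_norm (w : R2) (i : Fin 2) : |w i| ≤ ‖w‖ := by
  rw [EuclideanSpace.norm_eq]
  have h1 : |w i| = Real.sqrt (‖w i‖ ^ 2) := by
    rw [Real.sqrt_sq_eq_abs, Real.norm_eq_abs, abs_abs]
  rw [h1]
  apply Real.sqrt_le_sqrt
  exact Finset.single_le_sum (f := fun j => ‖w j‖ ^ 2) (fun j _ => by positivity) (Finset.mem_univ i)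

lemma integrable_of_zero_outside {h : R2 → ℝ} (hc : Continuous h) {r : ℝ}
    (h0 : ∀ v, r ≤ ‖v‖ → h v = 0) : Integrable h := by
  apply hc.integrable_of_hasCompactSupport
  apply HasCompactSupport.intro (isCompact_closedBall (0:R2) (max r 0))
  intro v hv
  apply h0
  have h1 : max r 0 < ‖v‖ := by
    simpa [Metric.mem_closedBall, dist_zero_right, not_le] using hv
  exact le_of_lt (lt_of_le_of_lt (le_max_left _ _) h1)

lemma fderiv_zero_of_zero_outside {F : ℝ × R2 → ℝ} {r : ℝ}
    (h0 : ∀ s v, r ≤ ‖v‖ → F (s, v) = 0) {p : ℝ × R2} (hp : r < ‖p.2‖) :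
    fderiv ℝ F p = 0 := by
  have hopen : IsOpen {q : ℝ × R2 | r < ‖q.2‖} :=
    isOpen_lt continuous_const continuous_snd.norm
  have hev : F =ᶠ[nhds p] fun _ => (0:ℝ) :=
    Filter.eventually_of_mem (hopen.mem_nhds hp) (fun q hq => h0 q.1 q.2 (le_of_lt hq))
  rw [hev.fderiv_eq]
  exact fderiv_const_apply 0

lemma fderiv_zero_of_zero_outside' {g : R2 → ℝ} {r : ℝ}
    (h0 : ∀ v, r ≤ ‖v‖ → g v = 0) {v : R2} (hv : r < ‖v‖) :
    fderiv ℝ g v = 0 := by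
  have hopen : IsOpen {w : R2 | r < ‖w‖} := isOpen_lt continuous_const continuous_norm
  have hev : g =ᶠ[nhds v] fun _ => (0:ℝ) :=
    Filter.eventually_of_mem (hopen.mem_nhds hv) (fun w hw => h0 w (le_of_lt hw))
  rw [hev.fderiv_eq]
  exact fderiv_const_apply 0

lemma lemA {F : ℝ × R2 → ℝ} (hF : ContDiff ℝ 1 F) {r : ℝ} (hr : 0 < r)
    (h0 : ∀ s v, r ≤ ‖v‖ → F (s, v) = 0) (t₀ : ℝ) :
    Integrable (fun v : R2 => fderiv ℝ F (t₀, v) (1, 0)) ∧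
      HasDerivAt (fun s => ∫ v : R2, F (s, v)) (∫ v : R2, fderiv ℝ F (t₀, v) (1, 0)) t₀ := by
  have hFd : Differentiable ℝ F := hF.differentiable one_ne_zero
  have hFc : Continuous F := hF.continuous
  have hF' : Continuous (fun p : ℝ × R2 => fderiv ℝ F p (1, 0)) :=
    (hF.continuous_fderiv one_ne_zero).clm_apply continuous_const
  set K : Set (ℝ × R2) := (Metric.closedBall t₀ 1) ×ˢ (Metric.closedBall (0:R2) r) with hK
  have hKc : IsCompact K := (isCompact_closedBall _ _).prod (isCompact_closedBall _ _)
  obtain ⟨C, hC⟩ := hKc.exists_bound_of_continuousOn hF'.continuousOn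
  set bound : R2 → ℝ := (Metric.closedBall (0:R2) r).indicator (fun _ => C) with hbound
  have hbound_int : Integrable bound := by
    apply IntegrableOn.integrable_indicator _ measurableSet_closedBall
    exact integrableOn_const measure_closedBall_lt_top.ne
  have key := hasDerivAt_integral_of_dominated_loc_of_deriv_le
    (F := fun s v => F (s, v)) (F' := fun s v => fderiv ℝ F (s, v) (1, 0))
    (bound := bound) (μ := volume) (x₀ := t₀) (Metric.ball_mem_nhds t₀ one_pos)
    (Filter.Eventually.of_forall fun s =>
      (hFc.comp (Continuous.prodMk_right s)).aestronglyMeasurable)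
    (integrable_of_zero_outside (hFc.comp (Continuous.prodMk_right t₀)) (h0 t₀))
    ((hF'.comp (Continuous.prodMk_right t₀)).aestronglyMeasurable)
    (Filter.Eventually.of_forall fun v => ?_) hbound_int
    (Filter.Eventually.of_forall fun v s _ => ?_)
  · exact key
  · intro s hs
    by_cases hv : v ∈ Metric.closedBall (0:R2) r
    · have hmem : (s, v) ∈ K := ⟨Metric.ball_subset_closedBall hs, hv⟩
      simpa [hbound, Set.indicator_of_mem hv] using hC _ hmem
    · have hrv : r < ‖v‖ := by
        simpa [Metric.mem_closedBall, dist_zero_right, not_le] using hv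
      have h2 : fderiv ℝ F (s, v) = 0 := fderiv_zero_of_zero_outside h0 hrv
      simp only [h2]
      simp [hbound, Set.indicator_of_notMem hv]
  · exact (hFd (s, v)).hasFDerivAt.comp_hasDerivAt s
      ((hasDerivAt_id s).prodMk (hasDerivAt_const s v))

lemma integral_deriv_zero {ψ : ℝ → ℝ} (hψ : ContDiff ℝ 1 ψ) {r : ℝ}
    (h0 : ∀ s, r ≤ |s| → ψ s = 0) : ∫ s, deriv ψ s = 0 := by
  set M : ℝ := |r| + 1 with hM
  have hM0 : (0:ℝ) < M := by positivity
  have hrM : r < M := lt_of_le_of_lt (le_abs_self r) (by linarith)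
  have hout : ∀ s, s ∉ Set.Ioc (-M) M → deriv ψ s = 0 := by
    intro s hs
    have h1 : s ≤ -M ∨ M < s := by
      simp only [Set.mem_Ioc, not_and_or, not_lt, not_le] at hs
      exact hs
    have h2 : r < |s| := by
      rcases h1 with h | h
      · have : M ≤ |s| := by rw [abs_of_nonpos (by linarith)]; linarith
        linarith
      · have : M ≤ |s| := le_trans h.le (le_abs_self s)
        linarith
    have hopen : IsOpen {u : ℝ | r < |u|} := isOpen_lt continuous_const continuous_abs
    have hev : ψ =ᶠ[nhds s] fun _ => (0:ℝ) :=
      Filter.eventually_of_mem (hopen.mem_nhds h2) (fun u hu => h0 u (le_of_lt hu))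
    rw [hev.deriv_eq]
    simp
  have h1 : ∫ s, deriv ψ s = ∫ s in Set.Ioc (-M) M, deriv ψ s :=
    (setIntegral_eq_integral_of_forall_compl_eq_zero hout).symm
  rw [h1, ← intervalIntegral.integral_of_le (by linarith : -M ≤ M)]
  rw [intervalIntegral.integral_deriv_eq_sub
    (fun u _ => (hψ.differentiable one_ne_zero).differentiableAt)
    ((hψ.continuous_deriv le_rfl).intervalIntegrable _ _)]
  rw [h0 M (by rw [abs_of_pos hM0]; linarith), h0 (-M) (by rw [abs_neg, abs_of_pos hM0]; linarith),
    sub_zero]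

lemma lemB {g : R2 → ℝ} (hg : ContDiff ℝ 1 g) {r : ℝ}
    (h0 : ∀ v, r ≤ ‖v‖ → g v = 0) (i : Fin 2) :
    ∫ v : R2, fderiv ℝ g v (EuclideanSpace.single i 1) = 0 := by
  set e0 : R2 := EuclideanSpace.single 0 1 with he0
  set e1 : R2 := EuclideanSpace.single 1 1 with he1
  set m : R2 ≃ᵐ (ℝ × ℝ) :=
    (MeasurableEquiv.toLp 2 (Fin 2 → ℝ)).symm.trans (MeasurableEquiv.piFinTwo fun _ => ℝ) with hm
  have hmp : MeasurePreserving m volume volume :=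
    (volume_preserving_piFinTwo _).comp (EuclideanSpace.volume_preserving_symm_measurableEquiv_toLp (Fin 2))
  have hsymm : ∀ a b : ℝ, m.symm (a, b) = a • e0 + b • e1 := by
    intro a b
    have h1 : m (a • e0 + b • e1) = (a, b) := by
      simp [hm, MeasurableEquiv.trans_apply, MeasurableEquiv.coe_toLp,
        MeasurableEquiv.piFinTwo_apply, he0, he1, EuclideanSpace.single_apply]
    rw [← h1, MeasurableEquiv.symm_apply_apply]
  set h : R2 → ℝ := fun v => fderiv ℝ g v (EuclideanSpace.single i 1) with hh
  have hhc : Continuous h := (hg.continuous_fderiv one_ne_zero).clm_apply continuous_const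
  have hzero : ∀ v : R2, r < ‖v‖ → h v = 0 := by
    intro v hv
    simp only [hh, fderiv_zero_of_zero_outside' h0 hv]
    rfl
  have hint : Integrable h :=
    integrable_of_zero_outside hhc (r := r + 1) (fun v hv => hzero v (by linarith))
  have hint2 : Integrable (h ∘ m.symm) :=
    ((MeasurePreserving.symm m hmp).integrable_comp_emb m.symm.measurableEmbedding).2 hint
  have hcomp : ∫ v : R2, h v = ∫ p : ℝ × ℝ, h (m.symm p) := ((MeasurePreserving.symm m hmp).integral_comp' h).symm
  have hgd := hg.differentiable one_ne_zero
  fin_cases i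
  · have h1 : ∫ v : R2, h v = ∫ b : ℝ, ∫ a : ℝ, h (m.symm (a, b)) :=
      hcomp.trans (integral_prod_symm _ hint2)
    have h2 : ∀ b : ℝ, (∫ a : ℝ, h (m.symm (a, b))) = 0 := by
      intro b
      set ψ : ℝ → ℝ := fun a => g (a • e0 + b • e1) with hψ
      have hψc : ContDiff ℝ 1 ψ :=
        hg.comp ((contDiff_id.smul contDiff_const).add contDiff_const)
      have hψd : ∀ a : ℝ, HasDerivAt ψ (fderiv ℝ g (a • e0 + b • e1) e0) a := by
        intro a
        have h3 : HasDerivAt (fun s : ℝ => s • e0) ((1:ℝ) • e0) a :=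
          (hasDerivAt_id a).smul_const e0
        rw [one_smul] at h3
        exact (hgd _).hasFDerivAt.comp_hasDerivAt a (h3.add_const _)
      have hψ0 : ∀ s : ℝ, r ≤ |s| → ψ s = 0 := by
        intro s hs
        apply h0
        have hc : (s • e0 + b • e1) 0 = s := by
          simp [he0, he1, EuclideanSpace.single_apply]
        calc r ≤ |s| := hs
          _ = |(s • e0 + b • e1) 0| := by rw [hc]
          _ ≤ ‖s • e0 + b • e1‖ := abs_coord_le_norm _ 0
      have h4 : ∀ a : ℝ, h (m.symm (a, b)) = deriv ψ a := by
        intro a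
        rw [hsymm a b, hh]
        exact ((hψd a).deriv).symm
      simp only [h4]
      exact integral_deriv_zero hψc hψ0
    rw [h1]
    simp only [h2, integral_zero]
  · have h1 : ∫ v : R2, h v = ∫ a : ℝ, ∫ b : ℝ, h (m.symm (a, b)) :=
      hcomp.trans (integral_prod _ hint2)
    have h2 : ∀ a : ℝ, (∫ b : ℝ, h (m.symm (a, b))) = 0 := by
      intro a
      set ψ : ℝ → ℝ := fun b => g (a • e0 + b • e1) with hψ
      have hψc : ContDiff ℝ 1 ψ :=
        hg.comp (contDiff_const.add (contDiff_id.smul contDiff_const))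
      have hψd : ∀ b : ℝ, HasDerivAt ψ (fderiv ℝ g (a • e0 + b • e1) e1) b := by
        intro b
        have h3 : HasDerivAt (fun s : ℝ => s • e1) ((1:ℝ) • e1) b :=
          (hasDerivAt_id b).smul_const e1
        rw [one_smul] at h3
        exact (hgd _).hasFDerivAt.comp_hasDerivAt b (h3.const_add _)
      have hψ0 : ∀ s : ℝ, r ≤ |s| → ψ s = 0 := by
        intro s hs
        apply h0
        have hc : (a • e0 + s • e1) 1 = s := by
          simp [he0, he1, EuclideanSpace.single_apply]
        calc r ≤ |s| := hs
          _ = |(a • e0 + s • e1) 1| := by rw [hc]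
          _ ≤ ‖a • e0 + s • e1‖ := abs_coord_le_norm _ 1
      have h4 : ∀ b : ℝ, h (m.symm (a, b)) = deriv ψ b := by
        intro b
        rw [hsymm a b, hh]
        exact ((hψd b).deriv).symm
      simp only [h4]
      exact integral_deriv_zero hψc hψ0
    rw [h1]
    simp only [h2, integral_zero]

lemma partial_fst {F : ℝ × R2 → ℝ} (hF : Differentiable ℝ F) (t₀ : ℝ) (v : R2) :
    HasDerivAt (fun s => F (s, v)) (fderiv ℝ F (t₀, v) (1, 0)) t₀ :=
  (hF _).hasFDerivAt.comp_hasDerivAt t₀ ((hasDerivAt_id t₀).prodMk (hasDerivAt_const t₀ v))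

lemma line_hasDerivAt (v u : R2) : HasDerivAt (fun s : ℝ => v + s • u) u 0 := by
  have h3 : HasDerivAt (fun s : ℝ => s • u) ((1:ℝ) • u) 0 := (hasDerivAt_id 0).smul_const u
  rw [one_smul] at h3
  exact h3.const_add v

lemma partial_dir {F' : Type*} [NormedAddCommGroup F'] [NormedSpace ℝ F'] {g : R2 → F'}
    (hg : Differentiable ℝ g) (v u : R2) :
    HasDerivAt (fun s : ℝ => g (v + s • u)) (fderiv ℝ g v u) 0 := by
  have h5 : HasFDerivAt g (fderiv ℝ g v) (v + (0:ℝ) • u) := by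
    rw [zero_smul, add_zero]; exact (hg v).hasFDerivAt
  exact h5.comp_hasDerivAt 0 (line_hasDerivAt v u)

noncomputable def F1 (f : ℝ × R2 × R2 → ℝ) (ε : ℝ) (x : R2) : ℝ × R2 → ℝ :=
  fun p => f (p.1, x - ε • perp p.2, p.2)

noncomputable def F2 (E : ℝ × R2 → R2) (f : ℝ × R2 × R2 → ℝ) (ε t : ℝ) (x : R2) (i : Fin 2) :
    ℝ × R2 → ℝ :=
  fun p => perp (E (t, (x + p.1 • EuclideanSpace.single i 1) - ε • perp p.2)) i *
    f (t, (x + p.1 • EuclideanSpace.single i 1) - ε • perp p.2, p.2)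

noncomputable def Gd (E : ℝ × R2 → R2) (f : ℝ × R2 × R2 → ℝ) (ε t : ℝ) (x : R2) (i : Fin 2) :
    R2 → ℝ :=
  fun w => f (t, x - ε • perp w, w) *
    (ε⁻¹ * E (t, x - ε • perp w) i + (ε^2)⁻¹ * perp w i)

lemma F1_contDiff {f : ℝ × R2 × R2 → ℝ} (hf : ContDiff ℝ 1 f) (ε : ℝ) (x : R2) :
    ContDiff ℝ 1 (F1 f ε x) :=
  hf.comp (contDiff_fst.prodMk
    ((contDiff_const.sub ((perpL.contDiff.comp contDiff_snd).const_smul ε)).prodMk contDiff_snd))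

lemma F2_contDiff {E : ℝ × R2 → R2} (hE : ContDiff ℝ 1 E) {f : ℝ × R2 × R2 → ℝ}
    (hf : ContDiff ℝ 1 f) (ε t : ℝ) (x : R2) (i : Fin 2) :
    ContDiff ℝ 1 (F2 E f ε t x i) := by
  have hθ : ContDiff ℝ 1 (fun p : ℝ × R2 =>
      (x + p.1 • EuclideanSpace.single i (1:ℝ)) - ε • perp p.2) :=
    (contDiff_const.add (contDiff_fst.smul contDiff_const)).sub
      ((perpL.contDiff.comp contDiff_snd).const_smul ε)
  exact (((EuclideanSpace.proj i).comp perpL).contDiff.comp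
      (hE.comp (contDiff_const.prodMk hθ))).mul
    (hf.comp (contDiff_const.prodMk (hθ.prodMk contDiff_snd)))

lemma Gd_contDiff {E : ℝ × R2 → R2} (hE : ContDiff ℝ 1 E) {f : ℝ × R2 × R2 → ℝ}
    (hf : ContDiff ℝ 1 f) (ε t : ℝ) (x : R2) (i : Fin 2) :
    ContDiff ℝ 1 (Gd E f ε t x i) := by
  have hτ : ContDiff ℝ 1 (fun w : R2 => x - ε • perp w) :=
    contDiff_const.sub (perpL.contDiff.const_smul ε)
  exact (hf.comp (contDiff_const.prodMk (hτ.prodMk contDiff_id))).mul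
    ((contDiff_const.mul ((EuclideanSpace.proj i).contDiff.comp
        (hE.comp (contDiff_const.prodMk hτ)))).add
      (contDiff_const.mul ((EuclideanSpace.proj i).comp perpL).contDiff))

lemma hA_val {f : ℝ × R2 × R2 → ℝ} (hf : ContDiff ℝ 1 f) (ε : ℝ) (x : R2) (t : ℝ) (v : R2) :
    fderiv ℝ (F1 f ε x) (t, v) (1, (0:R2)) =
      fderiv ℝ f (t, x - ε • perp v, v) ((1:ℝ), (0:R2), (0:R2)) := by
  have hfd : Differentiable ℝ f := hf.differentiable one_ne_zero
  have c1 := partial_fst ((F1_contDiff hf ε x).differentiable one_ne_zero) t v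
  have c2 : HasDerivAt (fun s => f (s, x - ε • perp v, v))
      (fderiv ℝ f (t, x - ε • perp v, v) ((1:ℝ), (0:R2), (0:R2))) t :=
    (hfd _).hasFDerivAt.comp_hasDerivAt t
      ((hasDerivAt_id t).prodMk ((hasDerivAt_const t (x - ε • perp v)).prodMk (hasDerivAt_const t v)))
  exact c1.unique c2

lemma hP_val {E : ℝ × R2 → R2} (hE : ContDiff ℝ 1 E) {f : ℝ × R2 × R2 → ℝ}
    (hf : ContDiff ℝ 1 f) (ε t : ℝ) (x : R2) (v : R2) (i : Fin 2) :
    fderiv ℝ (F2 E f ε t x i) ((0:ℝ), v) (1, (0:R2)) =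
      perp (fderiv ℝ E (t, x - ε • perp v) ((0:ℝ), EuclideanSpace.single i 1)) i *
        f (t, x - ε • perp v, v) +
      perp (E (t, x - ε • perp v)) i *
        fderiv ℝ f (t, x - ε • perp v, v) ((0:ℝ), EuclideanSpace.single i 1, (0:R2)) := by
  have hfd : Differentiable ℝ f := hf.differentiable one_ne_zero
  have hEd : Differentiable ℝ E := hE.differentiable one_ne_zero
  have c1 := partial_fst ((F2_contDiff hE hf ε t x i).differentiable one_ne_zero) 0 v
  have hcur : HasDerivAt (fun s : ℝ => (x + s • EuclideanSpace.single i (1:ℝ)) - ε • perp v)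
      (EuclideanSpace.single i 1) 0 := by
    have h3 : HasDerivAt (fun s : ℝ => s • EuclideanSpace.single i (1:ℝ))
        ((1:ℝ) • EuclideanSpace.single i (1:ℝ)) 0 := (hasDerivAt_id 0).smul_const _
    rw [one_smul] at h3
    exact (h3.const_add x).sub_const _
  have hy0 : (x + (0:ℝ) • EuclideanSpace.single i (1:ℝ)) - ε • perp v = x - ε • perp v := by
    rw [zero_smul, add_zero]
  have hEF : HasFDerivAt E (fderiv ℝ E (t, x - ε • perp v))
      ((t, (x + (0:ℝ) • EuclideanSpace.single i (1:ℝ)) - ε • perp v) : ℝ × R2) := by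
    rw [hy0]; exact (hEd _).hasFDerivAt
  have cE : HasDerivAt
      (fun s : ℝ => E (t, (x + s • EuclideanSpace.single i 1) - ε • perp v))
      (fderiv ℝ E (t, x - ε • perp v) ((0:ℝ), EuclideanSpace.single i 1)) 0 :=
    hEF.comp_hasDerivAt 0 ((hasDerivAt_const 0 t).prodMk hcur)
  have cP : HasDerivAt
      (fun s : ℝ => perp (E (t, (x + s • EuclideanSpace.single i 1) - ε • perp v)) i)
      (perp (fderiv ℝ E (t, x - ε • perp v) ((0:ℝ), EuclideanSpace.single i 1)) i) 0 :=
    ((EuclideanSpace.proj i).comp perpL).hasFDerivAt.comp_hasDerivAt 0 cE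
  have hfF : HasFDerivAt f (fderiv ℝ f (t, x - ε • perp v, v))
      ((t, (x + (0:ℝ) • EuclideanSpace.single i (1:ℝ)) - ε • perp v, v) : ℝ × R2 × R2) := by
    rw [hy0]; exact (hfd _).hasFDerivAt
  have cf : HasDerivAt
      (fun s : ℝ => f (t, (x + s • EuclideanSpace.single i 1) - ε • perp v, v))
      (fderiv ℝ f (t, x - ε • perp v, v) ((0:ℝ), EuclideanSpace.single i 1, (0:R2))) 0 :=
    hfF.comp_hasDerivAt 0 ((hasDerivAt_const 0 t).prodMk (hcur.prodMk (hasDerivAt_const 0 v)))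
  have c2 := cP.mul cf
  rw [c1.unique c2]
  simp only [hy0]

lemma hQ_val {E : ℝ × R2 → R2} (hE : ContDiff ℝ 1 E) {f : ℝ × R2 × R2 → ℝ}
    (hf : ContDiff ℝ 1 f) (ε t : ℝ) (x : R2) (v : R2) (i : Fin 2) :
    fderiv ℝ (Gd E f ε t x i) v (EuclideanSpace.single i 1) =
      fderiv ℝ f (t, x - ε • perp v, v)
          ((0:ℝ), -(ε • perp (EuclideanSpace.single i 1)), EuclideanSpace.single i 1) *
        (ε⁻¹ * E (t, x - ε • perp v) i + (ε^2)⁻¹ * perp v i) +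
      f (t, x - ε • perp v, v) *
        (ε⁻¹ * (fderiv ℝ E (t, x - ε • perp v)
            ((0:ℝ), -(ε • perp (EuclideanSpace.single i 1)))) i +
          (ε^2)⁻¹ * perp (EuclideanSpace.single i 1) i) := by
  have hfd : Differentiable ℝ f := hf.differentiable one_ne_zero
  have hEd : Differentiable ℝ E := hE.differentiable one_ne_zero
  set u : R2 := EuclideanSpace.single i 1 with hu
  have c1 := partial_dir ((Gd_contDiff hE hf ε t x i).differentiable one_ne_zero) v u
  have hw : HasDerivAt (fun s : ℝ => v + s • u) u 0 := line_hasDerivAt v u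
  have cperp : HasDerivAt (fun s : ℝ => perp (v + s • u)) (perp u) 0 :=
    perpL.hasFDerivAt.comp_hasDerivAt 0 hw
  have xcur : HasDerivAt (fun s : ℝ => x - ε • perp (v + s • u)) (-(ε • perp u)) 0 :=
    (cperp.const_smul ε).const_sub x
  have hv0 : v + (0:ℝ) • u = v := by rw [zero_smul, add_zero]
  have hfF : HasFDerivAt f (fderiv ℝ f (t, x - ε • perp v, v))
      ((t, x - ε • perp (v + (0:ℝ) • u), v + (0:ℝ) • u) : ℝ × R2 × R2) := by
    rw [hv0]; exact (hfd _).hasFDerivAt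
  have cf : HasDerivAt (fun s : ℝ => f (t, x - ε • perp (v + s • u), v + s • u))
      (fderiv ℝ f (t, x - ε • perp v, v) ((0:ℝ), -(ε • perp u), u)) 0 :=
    hfF.comp_hasDerivAt 0 ((hasDerivAt_const 0 t).prodMk (xcur.prodMk hw))
  have hEF : HasFDerivAt E (fderiv ℝ E (t, x - ε • perp v))
      ((t, x - ε • perp (v + (0:ℝ) • u)) : ℝ × R2) := by
    rw [hv0]; exact (hEd _).hasFDerivAt
  have cE : HasDerivAt (fun s : ℝ => E (t, x - ε • perp (v + s • u)))
      (fderiv ℝ E (t, x - ε • perp v) ((0:ℝ), -(ε • perp u))) 0 :=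
    hEF.comp_hasDerivAt 0 ((hasDerivAt_const 0 t).prodMk xcur)
  have cEi : HasDerivAt (fun s : ℝ => E (t, x - ε • perp (v + s • u)) i)
      ((fderiv ℝ E (t, x - ε • perp v) ((0:ℝ), -(ε • perp u))) i) 0 :=
    ((EuclideanSpace.proj i : R2 →L[ℝ] ℝ)).hasFDerivAt.comp_hasDerivAt 0 cE
  have cpi : HasDerivAt (fun s : ℝ => perp (v + s • u) i) (perp u i) 0 :=
    ((EuclideanSpace.proj i).comp perpL).hasFDerivAt.comp_hasDerivAt 0 hw
  have cA : HasDerivAt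
      (fun s : ℝ => ε⁻¹ * E (t, x - ε • perp (v + s • u)) i + (ε^2)⁻¹ * perp (v + s • u) i)
      (ε⁻¹ * (fderiv ℝ E (t, x - ε • perp v) ((0:ℝ), -(ε • perp u))) i +
        (ε^2)⁻¹ * perp u i) 0 :=
    (cEi.const_mul ε⁻¹).add (cpi.const_mul ((ε^2)⁻¹))
  have c2 := cf.mul cA
  rw [c1.unique c2]
  simp only [hv0]

lemma hEsec_val {E : ℝ × R2 → R2} (hE : ContDiff ℝ 1 E) (t : ℝ) (y u : R2) :
    fderiv ℝ (fun y' => E (t, y')) y u = fderiv ℝ E (t, y) ((0:ℝ), u) := by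
  have hEd : Differentiable ℝ E := hE.differentiable one_ne_zero
  have hsec : Differentiable ℝ (fun y' : R2 => E (t, y')) :=
    hEd.comp ((differentiable_const t).prodMk differentiable_id)
  have c1 := partial_dir hsec y u
  have hy0 : y + (0:ℝ) • u = y := by rw [zero_smul, add_zero]
  have hEF : HasFDerivAt E (fderiv ℝ E (t, y)) ((t, y + (0:ℝ) • u) : ℝ × R2) := by
    rw [hy0]; exact (hEd _).hasFDerivAt
  have c2 : HasDerivAt (fun s : ℝ => E (t, y + s • u)) (fderiv ℝ E (t, y) ((0:ℝ), u)) 0 :=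
    hEF.comp_hasDerivAt 0 ((hasDerivAt_const 0 t).prodMk (line_hasDerivAt y u))
  exact c1.unique c2
lemma perp_apply_zero (w : R2) : perp w 0 = -w 1 := rfl
lemma perp_apply_one (w : R2) : perp w 1 = w 0 := rfl

lemma keyPointwise (ε : ℝ) (hε : 0 < ε) {E : ℝ × R2 → R2} (hE : ContDiff ℝ 1 E)
    (hcurl : ∀ t x, fderiv ℝ (fun y => E (t, y)) x (EuclideanSpace.single 1 1) 0
      = fderiv ℝ (fun y => E (t, y)) x (EuclideanSpace.single 0 1) 1)
    {f : ℝ × R2 × R2 → ℝ} (hf : ContDiff ℝ 1 f)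
    (hPDE : ∀ t x v, fderiv ℝ f (t, x, v)
      (1, ε⁻¹ • v, ε⁻¹ • E (t, x) + (ε ^ 2)⁻¹ • perp v) = 0)
    (t : ℝ) (x v : R2) :
    fderiv ℝ (F1 f ε x) (t, v) (1, (0:R2)) +
      (fderiv ℝ (F2 E f ε t x 0) ((0:ℝ), v) (1, (0:R2)) +
       fderiv ℝ (F2 E f ε t x 1) ((0:ℝ), v) (1, (0:R2))) +
      (fderiv ℝ (Gd E f ε t x 0) v (EuclideanSpace.single 0 1) +
       fderiv ℝ (Gd E f ε t x 1) v (EuclideanSpace.single 1 1)) = 0 := by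
  have hne : ε ≠ 0 := ne_of_gt hε
  rw [hA_val hf ε x t v, hP_val hE hf ε t x v 0, hP_val hE hf ε t x v 1,
      hQ_val hE hf ε t x v 0, hQ_val hE hf ε t x v 1]
  rw [perp_e0, perp_e1]
  have h1 : -(ε • -(EuclideanSpace.single (0 : Fin 2) (1:ℝ))) = ε • EuclideanSpace.single (0 : Fin 2) (1:ℝ) := by
    rw [smul_neg, neg_neg]
  have h4 : -(ε • (EuclideanSpace.single (1 : Fin 2) (1:ℝ))) = (-ε) • EuclideanSpace.single (1 : Fin 2) (1:ℝ) :=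
    (neg_smul ε _).symm
  rw [h1, h4]
  -- expansion of L
  have hLexp : ∀ (a : ℝ) (b c : R2), fderiv ℝ f (t, x - ε • perp v, v) (a, b, c) =
      a * fderiv ℝ f (t, x - ε • perp v, v) ((1:ℝ), (0:R2), (0:R2)) +
      b 0 * fderiv ℝ f (t, x - ε • perp v, v) ((0:ℝ), EuclideanSpace.single 0 1, (0:R2)) +
      b 1 * fderiv ℝ f (t, x - ε • perp v, v) ((0:ℝ), EuclideanSpace.single 1 1, (0:R2)) +
      c 0 * fderiv ℝ f (t, x - ε • perp v, v) ((0:ℝ), (0:R2), EuclideanSpace.single 0 1) +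
      c 1 * fderiv ℝ f (t, x - ε • perp v, v) ((0:ℝ), (0:R2), EuclideanSpace.single 1 1) := by
    intro a b c
    have hdec : ((a, b, c) : ℝ × R2 × R2) =
        a • ((1:ℝ), (0:R2), (0:R2)) + b 0 • ((0:ℝ), EuclideanSpace.single 0 1, (0:R2)) +
        b 1 • ((0:ℝ), EuclideanSpace.single 1 1, (0:R2)) +
        c 0 • ((0:ℝ), (0:R2), EuclideanSpace.single 0 1) +
        c 1 • ((0:ℝ), (0:R2), EuclideanSpace.single 1 1) := by
      refine Prod.ext ?_ (Prod.ext ?_ ?_)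
      · simp
      · ext j; fin_cases j <;> simp [EuclideanSpace.single_apply]
      · ext j; fin_cases j <;> simp [EuclideanSpace.single_apply]
    rw [hdec]
    simp only [map_add, ContinuousLinearMap.map_smul, smul_eq_mul]
  -- expansion of M in smul direction
  have hMs : ∀ (c : ℝ) (u : R2), fderiv ℝ E (t, x - ε • perp v) ((0:ℝ), c • u) =
      c • fderiv ℝ E (t, x - ε • perp v) ((0:ℝ), u) := by
    intro c u
    have h5 : ((0:ℝ), c • u) = c • (((0:ℝ), u) : ℝ × R2) := by
      rw [Prod.smul_mk, smul_zero]
    rw [h5, ContinuousLinearMap.map_smul]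
  have hcM : fderiv ℝ E (t, x - ε • perp v) ((0:ℝ), EuclideanSpace.single 1 1) 0 =
      fderiv ℝ E (t, x - ε • perp v) ((0:ℝ), EuclideanSpace.single 0 1) 1 := by
    have h6 := hcurl t (x - ε • perp v)
    rw [hEsec_val hE t (x - ε • perp v) (EuclideanSpace.single 1 1),
        hEsec_val hE t (x - ε • perp v) (EuclideanSpace.single 0 1)] at h6
    exact h6
  have hz := hPDE t (x - ε • perp v) v
  rw [hLexp] at hz
  have hd1 : fderiv ℝ f (t, x - ε • perp v, v)
      ((0:ℝ), (-ε) • EuclideanSpace.single 1 1, EuclideanSpace.single 0 1) =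
      -(ε * fderiv ℝ f (t, x - ε • perp v, v) ((0:ℝ), EuclideanSpace.single 1 1, (0:R2))) +
      fderiv ℝ f (t, x - ε • perp v, v) ((0:ℝ), (0:R2), EuclideanSpace.single 0 1) := by
    rw [hLexp]
    simp [EuclideanSpace.single_apply]
  have hd2 : fderiv ℝ f (t, x - ε • perp v, v)
      ((0:ℝ), ε • EuclideanSpace.single 0 1, EuclideanSpace.single 1 1) =
      ε * fderiv ℝ f (t, x - ε • perp v, v) ((0:ℝ), EuclideanSpace.single 0 1, (0:R2)) +
      fderiv ℝ f (t, x - ε • perp v, v) ((0:ℝ), (0:R2), EuclideanSpace.single 1 1) := by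
    rw [hLexp]
    simp [EuclideanSpace.single_apply]
  rw [hd1, hd2, hMs, hMs]
  simp only [EuclideanSpace.single_apply, PiLp.zero_apply, PiLp.add_apply, PiLp.smul_apply,
    PiLp.neg_apply, smul_eq_mul, perp_apply_zero, perp_apply_one] at hz ⊢
  rw [hcM]
  have hεinv : ε * ε⁻¹ = 1 := mul_inv_cancel₀ hne
  have hεinv2 : ε * (ε^2)⁻¹ = ε⁻¹ := by
    rw [sq, mul_inv, ← mul_assoc, mul_inv_cancel₀ hne, one_mul]
  norm_num
  linear_combination hz +
    (E (t, x - ε • perp v) 1 *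
        (fderiv ℝ f (t, x - ε • perp v, v)) ((0:ℝ), EuclideanSpace.single 0 1, (0:R2)) -
      E (t, x - ε • perp v) 0 *
        (fderiv ℝ f (t, x - ε • perp v, v)) ((0:ℝ), EuclideanSpace.single 1 1, (0:R2))) * hεinv +
    (v 0 * (fderiv ℝ f (t, x - ε • perp v, v)) ((0:ℝ), EuclideanSpace.single 0 1, (0:R2)) +
      v 1 * (fderiv ℝ f (t, x - ε • perp v, v)) ((0:ℝ), EuclideanSpace.single 1 1, (0:R2))) * hεinv2


/-- If `f` is a `C¹`, compactly supported (in `(x,v)`) solution of the Vlasov equation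
`∂_t f + (v/ε)·∇_x f + (E(t,x)/ε + v^⊥/ε²)·∇_v f = 0` with `E` a `C¹` curl-free field,
then the gyro-macroscopic density `ρ̄(t,x) = ∫ f(t, x − εv^⊥, v) dv` satisfies the
continuity equation `∂_t ρ̄ + div_x ∫ (E(t, x − εv^⊥))^⊥ f̄ dv = 0`. -/
theorem gyro_continuity_equation (ε : ℝ) (hε : 0 < ε)
    (E : ℝ × R2 → R2) (hE : ContDiff ℝ 1 E)
    (hcurl : ∀ t x, fderiv ℝ (fun y => E (t, y)) x (EuclideanSpace.single 1 1) 0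
      = fderiv ℝ (fun y => E (t, y)) x (EuclideanSpace.single 0 1) 1)
    (f : ℝ × R2 × R2 → ℝ) (hf : ContDiff ℝ 1 f)
    (R : ℝ) (hR : 0 < R)
    (hsupp : ∀ t x v, R ≤ ‖x‖ + ‖v‖ → f (t, x, v) = 0)
    (hPDE : ∀ t x v, fderiv ℝ f (t, x, v)
      (1, ε⁻¹ • v, ε⁻¹ • E (t, x) + (ε ^ 2)⁻¹ • perp v) = 0) :
    ∀ t x,
      deriv (fun s => ∫ v, f (s, x - ε • perp v, v)) t
        + (∑ i : Fin 2, deriv (fun s : ℝ =>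
            ∫ v, perp (E (t, (x + s • EuclideanSpace.single i 1) - ε • perp v)) i
              * f (t, (x + s • EuclideanSpace.single i 1) - ε • perp v, v)) 0) = 0 := by
  intro t x
  have hs1 : ∀ s v, R ≤ ‖v‖ → F1 f ε x (s, v) = 0 := fun s v hv =>
    hsupp s _ v (hv.trans (le_add_of_nonneg_left (norm_nonneg _)))
  have hs2 : ∀ i : Fin 2, ∀ s v, R ≤ ‖v‖ → F2 E f ε t x i (s, v) = 0 := by
    intro i s v hv
    have h := hsupp t ((x + s • EuclideanSpace.single i 1) - ε • perp v) v
      (hv.trans (le_add_of_nonneg_left (norm_nonneg _)))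
    unfold F2
    rw [h, mul_zero]
  have hs3 : ∀ i : Fin 2, ∀ v, R ≤ ‖v‖ → Gd E f ε t x i v = 0 := by
    intro i v hv
    have h := hsupp t (x - ε • perp v) v (hv.trans (le_add_of_nonneg_left (norm_nonneg _)))
    unfold Gd
    rw [h, zero_mul]
  have h1 := lemA (F1_contDiff hf ε x) hR hs1 t
  have h2 := fun i : Fin 2 => lemA (F2_contDiff hE hf ε t x i) hR (hs2 i) 0
  have hder1 : HasDerivAt (fun s => ∫ v : R2, f (s, x - ε • perp v, v))
      (∫ v : R2, fderiv ℝ (F1 f ε x) (t, v) (1, 0)) t := h1.2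
  have hder2 : ∀ i : Fin 2, HasDerivAt (fun s : ℝ =>
      ∫ v : R2, perp (E (t, (x + s • EuclideanSpace.single i 1) - ε • perp v)) i
        * f (t, (x + s • EuclideanSpace.single i 1) - ε • perp v, v))
      (∫ v : R2, fderiv ℝ (F2 E f ε t x i) ((0:ℝ), v) (1, 0)) 0 := fun i => (h2 i).2
  rw [hder1.deriv, Fin.sum_univ_two, (hder2 0).deriv, (hder2 1).deriv]
  have iA := h1.1
  have iP0 := (h2 0).1
  have iP1 := (h2 1).1
  have iQ : ∀ i : Fin 2, Integrable
      (fun v : R2 => fderiv ℝ (Gd E f ε t x i) v (EuclideanSpace.single i 1)) := by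
    intro i
    apply integrable_of_zero_outside (r := R + 1)
    · exact ((Gd_contDiff hE hf ε t x i).continuous_fderiv one_ne_zero).clm_apply continuous_const
    · intro v hv
      rw [fderiv_zero_of_zero_outside' (hs3 i) (lt_of_lt_of_le (by linarith) hv)]
      rfl
  have key := fun v : R2 => keyPointwise ε hε hE hcurl hf hPDE t x v
  calc (∫ v : R2, fderiv ℝ (F1 f ε x) (t, v) (1, 0)) +
        ((∫ v : R2, fderiv ℝ (F2 E f ε t x 0) ((0:ℝ), v) (1, 0)) +
         (∫ v : R2, fderiv ℝ (F2 E f ε t x 1) ((0:ℝ), v) (1, 0)))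
      = ∫ v : R2, (fderiv ℝ (F1 f ε x) (t, v) (1, 0) +
          (fderiv ℝ (F2 E f ε t x 0) ((0:ℝ), v) (1, 0) +
           fderiv ℝ (F2 E f ε t x 1) ((0:ℝ), v) (1, 0))) := by
        have iP01 : Integrable (fun v : R2 =>
            fderiv ℝ (F2 E f ε t x 0) ((0:ℝ), v) (1, 0) +
            fderiv ℝ (F2 E f ε t x 1) ((0:ℝ), v) (1, 0)) := iP0.add iP1
        rw [integral_add iA iP01, integral_add iP0 iP1]
    _ = ∫ v : R2, -(fderiv ℝ (Gd E f ε t x 0) v (EuclideanSpace.single 0 1) +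
          fderiv ℝ (Gd E f ε t x 1) v (EuclideanSpace.single 1 1)) := by
        apply integral_congr_ae
        apply Filter.Eventually.of_forall
        intro v
        beta_reduce
        linarith [key v]
    _ = -((∫ v : R2, fderiv ℝ (Gd E f ε t x 0) v (EuclideanSpace.single 0 1)) +
          (∫ v : R2, fderiv ℝ (Gd E f ε t x 1) v (EuclideanSpace.single 1 1))) := by
        rw [integral_neg, integral_add (iQ 0) (iQ 1)]
    _ = 0 := by
        rw [lemB (Gd_contDiff hE hf ε t x 0) (hs3 0) 0,
            lemB (Gd_contDiff hE hf ε t x 1) (hs3 1) 1]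
        simp
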